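/- Let G be a complete bipartite graph with parts U and W, where |U| = n and |W| = ⌊5n/6⌋, and let d and q be positive integers with q ≤ n/(150·d). Then, for all sufficiently large n, in the (q:1) Waiter-Client game on E(G) Waiter has a strategy to ensure that at the end of the game, for every set A ⊆ U of size ⌈n/(7d)⌉ and every set B ⊆ W of size ⌈n/7⌉, Client has claimed at least one edge with one endpoint in A and the other endpoint in B. -/

import Mathlib

open SimpleGraph

/-- In the Waiter-Client game with bias `q`, set of free elements `F` and set `C` of elements
claimed so far by Client, Client has a strategy to ensure that the final set of elements
claimed by him satisfies `P`.  In every round Waiter offers `q + 1` free elements, Client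
claims one of them and the remaining `q` go to Waiter; when fewer than `q + 1` free elements
remain, Waiter claims all of them and the game ends. -/
def ClientCanEnsure {α : Type*} [DecidableEq α] (q : ℕ) (P : Finset α → Prop)
    (F C : Finset α) : Prop :=
  if F.card < q + 1 then P C
  else ∀ O ⊆ F, O.card = q + 1 → ∃ x ∈ O, ClientCanEnsure q P (F \ O) (insert x C)
  termination_by F.card
  decreasing_by
    have h1 : O.Nonempty := by rw [← Finset.card_pos]; omega
    have h2 : (F \ O).card = F.card - O.card := by
      rw [Finset.card_sdiff, Finset.inter_eq_left.mpr ‹O ⊆ F›]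
    have h3 := Finset.card_le_card ‹O ⊆ F›
    have h4 := Finset.card_pos.mpr h1
    omega

/-- In the Waiter-Client game with bias `q`, set of free elements `F` and set `C` of elements
claimed so far by Client, Waiter has a strategy to ensure that the final set of elements
claimed by Client satisfies `P`.  In every round Waiter offers `q + 1` free elements, Client
claims one of them and the remaining `q` go to Waiter; when fewer than `q + 1` free elements
remain, Waiter claims all of them and the game ends.  (The hypothesis `O ⊆ F` guarding the
recursive call is redundant; it is only there to justify termination.) -/
def WaiterCanForce {α : Type*} [DecidableEq α] (q : ℕ) (P : Finset α → Prop)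
    (F C : Finset α) : Prop :=
  if F.card < q + 1 then P C
  else ∃ O ⊆ F, O.card = q + 1 ∧
    ∀ x ∈ O, O ⊆ F → WaiterCanForce q P (F \ O) (insert x C)
  termination_by F.card
  decreasing_by
    have h1 : O.Nonempty := ⟨x, ‹x ∈ O›⟩
    have h2 : (F \ O).card = F.card - O.card := by
      rw [Finset.card_sdiff, Finset.inter_eq_left.mpr ‹O ⊆ F›]
    have h3 := Finset.card_le_card ‹O ⊆ F›
    have h4 := Finset.card_pos.mpr h1
    omega

/-- The board of the game played on the edge set of the complete bipartite graph with parts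
`Fin n` and `Fin m`. -/
noncomputable def cbBoard (n m : ℕ) : Finset (Sym2 (Fin n ⊕ Fin m)) :=
  (Set.toFinite (completeBipartiteGraph (Fin n) (Fin m)).edgeSet).toFinset

open Finset

section Abstract
variable {α : Type*} [DecidableEq α]

noncomputable def wcRho (q : ℕ) : ℝ := Real.exp (-(1 / (2 * ((q : ℝ) + 1))))

noncomputable def wcPhi (q : ℕ) (SS : Finset (Finset α)) (F C : Finset α) : ℝ :=
  ∑ S ∈ SS.filter fun S => S ∩ C = ∅, wcRho q ^ (S ∩ F).card

noncomputable def wcWt (q : ℕ) (SS : Finset (Finset α)) (F C : Finset α) (v : α) : ℝ :=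
  ∑ S ∈ SS.filter fun S => S ∩ C = ∅ ∧ v ∈ S, wcRho q ^ (S ∩ F).card

noncomputable def wcBudget (q N : ℕ) : ℝ :=
  if N ≤ q then wcRho q ^ q / 2
  else wcRho q ^ q / 2 * ∏ k ∈ range ((N - q - 1) / q + 1), (1 + (5/6 : ℝ) ^ k)⁻¹

lemma wcRho_pos (q : ℕ) : 0 < wcRho q := Real.exp_pos _

lemma wcRho_le_one (q : ℕ) : wcRho q ≤ 1 := by
  have h : (0:ℝ) ≤ 1 / (2 * ((q:ℝ) + 1)) := by positivity
  calc wcRho q ≤ Real.exp 0 := Real.exp_le_exp.mpr (by simp [h]; positivity)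
    _ = 1 := Real.exp_zero

lemma factor_pos (k : ℕ) : (0:ℝ) < (1 + (5/6 : ℝ) ^ k)⁻¹ := by positivity

lemma factor_le_one (k : ℕ) : (1 + (5/6 : ℝ) ^ k)⁻¹ ≤ 1 := by
  rw [inv_le_one_iff₀]
  right
  have : (0:ℝ) ≤ (5/6:ℝ)^k := by positivity
  linarith

lemma prod_factor_le_one (t : Finset ℕ) : ∏ k ∈ t, (1 + (5/6 : ℝ) ^ k)⁻¹ ≤ 1 :=
  prod_le_one (fun k _ => le_of_lt (factor_pos k)) (fun k _ => factor_le_one k)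

lemma prod_factor_pos (t : Finset ℕ) : 0 < ∏ k ∈ t, (1 + (5/6 : ℝ) ^ k)⁻¹ :=
  prod_pos (fun k _ => factor_pos k)

lemma prod_factor_mono {s t : Finset ℕ} (hst : s ⊆ t) :
    ∏ k ∈ t, (1 + (5/6 : ℝ) ^ k)⁻¹ ≤ ∏ k ∈ s, (1 + (5/6 : ℝ) ^ k)⁻¹ := by
  rw [← Finset.prod_sdiff hst]
  exact mul_le_of_le_one_left (le_of_lt (prod_factor_pos s)) (prod_factor_le_one _)

lemma wcBudget_pos (q N : ℕ) : 0 < wcBudget q N := by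
  rw [wcBudget]
  split_ifs
  · have := wcRho_pos q
    positivity
  · exact mul_pos (by have := wcRho_pos q; positivity) (prod_factor_pos _)

lemma wcBudget_le (q N : ℕ) : wcBudget q N ≤ wcRho q ^ q / 2 := by
  rw [wcBudget]
  split_ifs
  · exact le_refl _
  · exact mul_le_of_le_one_right (by have := wcRho_pos q; positivity) (prod_factor_le_one _)

lemma wcBudget_mono (q : ℕ) {N N' : ℕ} (h : N' ≤ N) : wcBudget q N ≤ wcBudget q N' := by
  rw [wcBudget, wcBudget]
  have hc : (0:ℝ) ≤ wcRho q ^ q / 2 := by have := wcRho_pos q; positivity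
  split_ifs with h1 h2 h2
  · exact le_refl _
  · omega
  · exact mul_le_of_le_one_right hc (prod_factor_le_one _)
  · apply mul_le_mul_of_nonneg_left _ hc
    apply prod_factor_mono
    apply Finset.range_subset_range.mpr
    have e1 : N' - q - 1 ≤ N - q - 1 := by omega
    have := Nat.div_le_div_right (c := q) e1
    omega

lemma geo_le (K : ℕ) : ∑ k ∈ range K, (5/6:ℝ)^k ≤ 6 - 6 * (5/6:ℝ)^K := by
  induction K with
  | zero => simp
  | succ K ih =>
      rw [Finset.sum_range_succ, pow_succ]
      linarith [ih]

lemma wcBudget_ge (q N : ℕ) : wcRho q ^ q / 2 * Real.exp (-6) ≤ wcBudget q N := by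
  rw [wcBudget]
  have hc : (0:ℝ) ≤ wcRho q ^ q / 2 := by have := wcRho_pos q; positivity
  split_ifs
  · apply mul_le_of_le_one_right hc
    rw [← Real.exp_zero]
    apply Real.exp_le_exp.mpr; norm_num
  · apply mul_le_mul_of_nonneg_left _ hc
    set t := (N - q - 1) / q + 1
    have h1 : ∏ k ∈ range t, (1 + (5/6 : ℝ) ^ k) ≤ Real.exp 6 := by
      calc ∏ k ∈ range t, (1 + (5/6 : ℝ) ^ k) ≤ ∏ k ∈ range t, Real.exp ((5/6:ℝ)^k) := by
            apply Finset.prod_le_prod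
            · intro k _; positivity
            · intro k _; linarith [Real.add_one_le_exp ((5/6:ℝ)^k)]
        _ = Real.exp (∑ k ∈ range t, (5/6:ℝ)^k) := by rw [Real.exp_sum]
        _ ≤ Real.exp 6 := by
            apply Real.exp_le_exp.mpr
            have := geo_le t
            have : (0:ℝ) ≤ (5/6:ℝ)^t := by positivity
            linarith [geo_le t]
    rw [Finset.prod_inv_distrib, Real.exp_neg]
    exact inv_anti₀ (prod_pos (fun k _ => by positivity)) h1

lemma wcBudget_step (q : ℕ) (hq : 0 < q) {N : ℕ} (hN : q + 1 ≤ N) :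
    wcBudget q N * (1 + (5/6:ℝ) ^ ((N - q - 1) / q)) ≤ wcBudget q (N - (q+1)) := by
  have hc : (0:ℝ) ≤ wcRho q ^ q / 2 := by have := wcRho_pos q; positivity
  set J := (N - q - 1) / q with hJ
  have hL : wcBudget q N * (1 + (5/6:ℝ) ^ J)
      = wcRho q ^ q / 2 * ∏ k ∈ range J, (1 + (5/6 : ℝ) ^ k)⁻¹ := by
    rw [wcBudget, if_neg (by omega)]
    rw [Finset.prod_range_succ]
    have h6 : (0:ℝ) < 1 + (5/6:ℝ)^J := by positivity
    field_simp
    ring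
  rw [hL, wcBudget]
  split_ifs with h2
  · exact mul_le_of_le_one_right hc (prod_factor_le_one _)
  · apply mul_le_mul_of_nonneg_left _ hc
    apply prod_factor_mono
    apply Finset.range_subset_range.mpr
    -- (N - (q+1) - q - 1)/q + 1 ≤ J
    have hN2 : 2*q + 2 ≤ N := by omega
    have e1 : N - q - 1 = (N - 2*q - 1) + q := by omega
    have e2 : J = (N - 2*q - 1)/q + 1 := by
      rw [hJ, e1, Nat.add_div_right _ hq]
    have e3 : N - (q+1) - q - 1 ≤ N - 2*q - 1 := by omega
    have := Nat.div_le_div_right (c := q) e3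
    omega

lemma wcPhi_nonneg (q : ℕ) (SS : Finset (Finset α)) (F C : Finset α) :
    0 ≤ wcPhi q SS F C :=
  Finset.sum_nonneg fun S _ => pow_nonneg (le_of_lt (wcRho_pos q)) _

lemma wcWt_nonneg (q : ℕ) (SS : Finset (Finset α)) (F C : Finset α) (v : α) :
    0 ≤ wcWt q SS F C v :=
  Finset.sum_nonneg fun S _ => pow_nonneg (le_of_lt (wcRho_pos q)) _

lemma wcWt_le_wcPhi (q : ℕ) (SS : Finset (Finset α)) (F C : Finset α) (v : α) :
    wcWt q SS F C v ≤ wcPhi q SS F C := by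
  apply Finset.sum_le_sum_of_subset_of_nonneg
  · intro S hS
    simp only [Finset.mem_filter] at hS ⊢
    exact ⟨hS.1, hS.2.1⟩
  · intro S _ _
    exact pow_nonneg (le_of_lt (wcRho_pos q)) _

lemma rho_inv_pow_le (q : ℕ) {b : ℕ} (hb : b ≤ q + 1) :
    ((wcRho q)⁻¹ : ℝ) ^ b ≤ 1 + 33/20 / (2 * ((q:ℝ) + 1)) * b := by
  have hq1 : (0:ℝ) < 2 * ((q:ℝ) + 1) := by positivity
  set t : ℝ := (b : ℝ) / (2 * ((q:ℝ) + 1)) with ht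
  have ht0 : 0 ≤ t := by positivity
  have ht2 : t ≤ 1/2 := by
    rw [ht, div_le_iff₀ hq1]
    have : (b:ℝ) ≤ (q:ℝ) + 1 := by exact_mod_cast hb
    linarith
  have hinv : (wcRho q)⁻¹ = Real.exp (1 / (2 * ((q:ℝ) + 1))) := by
    rw [wcRho, ← Real.exp_neg, neg_neg]
  have hpow : ((wcRho q)⁻¹ : ℝ) ^ b = Real.exp t := by
    rw [hinv, ← Real.exp_nat_mul, ht]
    congr 1
    field_simp
  rw [hpow]
  have hexp_half : Real.exp (1/2 : ℝ) ≤ 33/20 := by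
    have h1 := Real.exp_one_lt_d9
    have h2 : Real.exp (1/2 : ℝ) * Real.exp (1/2 : ℝ) = Real.exp 1 := by
      rw [← Real.exp_add]; norm_num
    nlinarith [Real.exp_pos (1/2 : ℝ)]
  have h3 : Real.exp t ≤ Real.exp (1/2 : ℝ) := Real.exp_le_exp.mpr ht2
  have h4 : (1 - t) * Real.exp t ≤ 1 := by
    have := Real.add_one_le_exp (-t)
    calc (1 - t) * Real.exp t ≤ Real.exp (-t) * Real.exp t := by
          apply mul_le_mul_of_nonneg_right _ (le_of_lt (Real.exp_pos t))
          linarith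
      _ = 1 := by rw [← Real.exp_add]; simp
  have h5 : Real.exp t ≤ 1 + t * Real.exp t := by nlinarith
  have h6 : Real.exp t ≤ 1 + t * (33/20) := by nlinarith
  rw [ht] at h6
  calc Real.exp t ≤ 1 + (b:ℝ) / (2 * ((q:ℝ) + 1)) * (33/20) := h6
    _ = 1 + 33/20 / (2 * ((q:ℝ) + 1)) * b := by ring

lemma phi_after (q : ℕ) (SS : Finset (Finset α)) (F C O : Finset α) (hO : O ⊆ F)
    (hcard : O.card = q + 1) {x : α} (hx : x ∈ O) :
    wcPhi q SS (F \ O) (insert x C) ≤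
      wcPhi q SS F C - wcWt q SS F C x
        + 33/20 / (2 * ((q:ℝ) + 1)) * ∑ v ∈ O.erase x, wcWt q SS F C v := by
  classical
  set ρ := wcRho q with hρ
  have hρ0 : 0 < ρ := wcRho_pos q
  set c : ℝ := 33/20 / (2 * ((q:ℝ) + 1)) with hc
  have hc0 : 0 ≤ c := by positivity
  set T : Finset (Finset α) := SS.filter (fun S => S ∩ C = ∅ ∧ x ∉ S) with hT
  -- step 1 : rewrite the filter
  have hfil : SS.filter (fun S => S ∩ insert x C = ∅) = T := by
    apply Finset.filter_congr
    intro S _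
    simp only [Finset.eq_empty_iff_forall_notMem, Finset.mem_inter, Finset.mem_insert,
      not_and, not_or, eq_iff_iff]
    constructor
    · intro h
      refine ⟨fun e he hec => (h e he).2 hec, fun hxS => (h x hxS).1 rfl⟩
    · rintro ⟨h1, h2⟩ e he
      constructor
      · intro hex; subst hex; exact absurd he h2
      · intro hec; exact h1 e he hec
  -- step 2 : cardinalities
  have hsub : ∀ S : Finset α, S ∩ O ⊆ S ∩ F :=
    fun S => Finset.inter_subset_inter (Finset.Subset.refl _) hO
  have hcard2 : ∀ S : Finset α, (S ∩ (F \ O)).card = (S ∩ F).card - (S ∩ O).card := by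
    intro S
    have : S ∩ (F \ O) = (S ∩ F) \ (S ∩ O) := by
      ext e
      simp only [Finset.mem_inter, Finset.mem_sdiff]
      tauto
    rw [this, Finset.card_sdiff_of_subset (hsub S)]
  have hle : ∀ S : Finset α, (S ∩ O).card ≤ q + 1 := by
    intro S
    calc (S ∩ O).card ≤ O.card := Finset.card_le_card Finset.inter_subset_right
      _ = q + 1 := hcard
  -- step 4 : main estimate
  have key : wcPhi q SS (F \ O) (insert x C)
      ≤ ∑ S ∈ T, ρ ^ (S ∩ F).card + c * ∑ S ∈ T, ρ ^ (S ∩ F).card * ((S ∩ O).card : ℝ) := by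
    rw [wcPhi, hfil]
    calc ∑ S ∈ T, ρ ^ (S ∩ (F \ O)).card
        = ∑ S ∈ T, ρ ^ (S ∩ F).card * (ρ⁻¹) ^ (S ∩ O).card := by
          apply Finset.sum_congr rfl
          intro S _
          rw [hcard2 S, pow_sub₀ _ (ne_of_gt hρ0) (Finset.card_le_card (hsub S)), inv_pow]
      _ ≤ ∑ S ∈ T, ρ ^ (S ∩ F).card * (1 + c * ((S ∩ O).card : ℝ)) := by
          apply Finset.sum_le_sum
          intro S _
          apply mul_le_mul_of_nonneg_left _ (pow_nonneg (le_of_lt hρ0) _)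
          exact rho_inv_pow_le q (hle S)
      _ = ∑ S ∈ T, ρ ^ (S ∩ F).card + c * ∑ S ∈ T, ρ ^ (S ∩ F).card * ((S ∩ O).card : ℝ) := by
          rw [Finset.mul_sum, ← Finset.sum_add_distrib]
          apply Finset.sum_congr rfl
          intro S _
          ring
  -- step 5 : the first sum
  have split : ∑ S ∈ T, ρ ^ (S ∩ F).card = wcPhi q SS F C - wcWt q SS F C x := by
    have h := Finset.sum_filter_add_sum_filter_not (SS.filter (fun S => S ∩ C = ∅))
      (fun S => x ∈ S) (fun S => ρ ^ (S ∩ F).card)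
    rw [Finset.filter_filter, Finset.filter_filter] at h
    have e1 : SS.filter (fun S => S ∩ C = ∅ ∧ x ∈ S) = SS.filter (fun a => a ∩ C = ∅ ∧ x ∈ a) := rfl
    have : wcWt q SS F C x + ∑ S ∈ T, ρ ^ (S ∩ F).card = wcPhi q SS F C := by
      rw [wcWt, wcPhi, hT]
      exact h
    linarith
  -- step 6 : the second sum
  have dbl : ∑ S ∈ T, ρ ^ (S ∩ F).card * ((S ∩ O).card : ℝ)
      ≤ ∑ v ∈ O.erase x, wcWt q SS F C v := by
    have hind : ∀ S : Finset α, ((S ∩ O).card : ℝ) = ∑ v ∈ O, if v ∈ S then (1:ℝ) else 0 := by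
      intro S
      rw [Finset.sum_boole, Finset.filter_mem_eq_inter, Finset.inter_comm]
    calc ∑ S ∈ T, ρ ^ (S ∩ F).card * ((S ∩ O).card : ℝ)
        = ∑ S ∈ T, ∑ v ∈ O, (if v ∈ S then ρ ^ (S ∩ F).card else 0) := by
          apply Finset.sum_congr rfl
          intro S _
          rw [hind S, Finset.mul_sum]
          apply Finset.sum_congr rfl
          intro v _
          split_ifs <;> ring
      _ = ∑ v ∈ O, ∑ S ∈ T, (if v ∈ S then ρ ^ (S ∩ F).card else 0) := Finset.sum_comm
      _ = ∑ v ∈ O, ∑ S ∈ T.filter (fun S => v ∈ S), ρ ^ (S ∩ F).card := by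
          apply Finset.sum_congr rfl
          intro v _
          exact (Finset.sum_filter _ _).symm
      _ = ∑ v ∈ O.erase x, ∑ S ∈ T.filter (fun S => v ∈ S), ρ ^ (S ∩ F).card := by
          rw [← Finset.sum_erase_add _ _ hx]
          have : T.filter (fun S => x ∈ S) = ∅ := by
            apply Finset.filter_false_of_mem
            intro S hS
            rw [hT, Finset.mem_filter] at hS
            exact hS.2.2
          rw [this]
          simp
      _ ≤ ∑ v ∈ O.erase x, wcWt q SS F C v := by
          apply Finset.sum_le_sum
          intro v _
          rw [wcWt]
          apply Finset.sum_le_sum_of_subset_of_nonneg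
          · intro S hS
            rw [hT, Finset.mem_filter] at hS
            rw [Finset.mem_filter] at hS ⊢
            exact ⟨hS.1.1, hS.1.2.1, hS.2⟩
          · intro S _ _
            exact pow_nonneg (le_of_lt hρ0) _
  calc wcPhi q SS (F \ O) (insert x C)
      ≤ ∑ S ∈ T, ρ ^ (S ∩ F).card + c * ∑ S ∈ T, ρ ^ (S ∩ F).card * ((S ∩ O).card : ℝ) := key
    _ ≤ (wcPhi q SS F C - wcWt q SS F C x) + c * ∑ v ∈ O.erase x, wcWt q SS F C v := by
        rw [split]
        have := mul_le_mul_of_nonneg_left dbl hc0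
        linarith

lemma exists_good_offer (q : ℕ) (hq : 0 < q) (SS : Finset (Finset α)) (F C : Finset α)
    (hF : q + 1 ≤ F.card) (hphi : wcPhi q SS F C ≤ wcBudget q F.card) :
    ∃ O ⊆ F, O.card = q + 1 ∧ ∀ x ∈ O,
      wcPhi q SS (F \ O) (insert x C) ≤ wcBudget q ((F \ O).card) := by
  classical
  have hFne : F.Nonempty := Finset.card_pos.mp (by omega)
  obtain ⟨vM, hvM, hmax⟩ := Finset.exists_max_image F (wcWt q SS F C) hFne
  set M : ℝ := wcWt q SS F C vM with hM
  have hM0 : 0 ≤ M := wcWt_nonneg q SS F C vM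
  have hMphi : M ≤ wcPhi q SS F C := wcWt_le_wcPhi q SS F C vM
  have hphi0 : 0 ≤ wcPhi q SS F C := wcPhi_nonneg q SS F C
  set J := (F.card - q - 1) / q with hJ
  set L := F.filter (fun v => wcWt q SS F C v ≤ M * (5/6:ℝ)^J) with hL
  have hq1 : (0:ℝ) < 2 * ((q:ℝ) + 1) := by positivity
  have hc0 : (0:ℝ) ≤ 33/20 / (2 * ((q:ℝ) + 1)) := by positivity
  have hcards : ∀ O : Finset α, O ⊆ F → O.card = q + 1 → (F \ O).card = F.card - (q+1) := by
    intro O hOF hOcard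
    rw [Finset.card_sdiff_of_subset hOF, hOcard]
  by_cases hcase : q + 1 ≤ L.card
  · -- sacrifice case
    obtain ⟨O, hOL, hOcard⟩ := Finset.exists_subset_card_eq hcase
    have hOF : O ⊆ F := hOL.trans (Finset.filter_subset _ _)
    refine ⟨O, hOF, hOcard, ?_⟩
    intro x hx
    have h1 := phi_after q SS F C O hOF hOcard hx
    have herase : (O.erase x).card = q := by
      rw [Finset.card_erase_of_mem hx, hOcard]
      omega
    have hsum : ∑ v ∈ O.erase x, wcWt q SS F C v ≤ (q : ℝ) * (M * (5/6:ℝ)^J) := by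
      have h2 := Finset.sum_le_card_nsmul (O.erase x) (wcWt q SS F C) (M * (5/6:ℝ)^J) ?_
      · rw [herase] at h2
        simpa [nsmul_eq_mul] using h2
      · intro v hv
        have hvL : v ∈ L := hOL (Finset.mem_of_mem_erase hv)
        rw [hL, Finset.mem_filter] at hvL
        exact hvL.2
    have hwx : 0 ≤ wcWt q SS F C x := wcWt_nonneg q SS F C x
    have hcq : 33/20 / (2 * ((q:ℝ) + 1)) * ((q:ℝ) * (M * (5/6:ℝ)^J)) ≤ M * (5/6:ℝ)^J := by
      have h56 : (0:ℝ) ≤ M * (5/6:ℝ)^J := by positivity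
      have h3 : 33/20 / (2 * ((q:ℝ) + 1)) * (q:ℝ) ≤ 1 := by
        rw [div_mul_eq_mul_div, div_le_one hq1]
        have := Nat.cast_nonneg (α := ℝ) q
        linarith
      nlinarith
    have h2 : wcPhi q SS (F \ O) (insert x C)
        ≤ wcPhi q SS F C * (1 + (5/6:ℝ)^J) := by
      have hsum' : 33/20 / (2 * ((q:ℝ) + 1)) * ∑ v ∈ O.erase x, wcWt q SS F C v
          ≤ M * (5/6:ℝ)^J := by
        calc 33/20 / (2 * ((q:ℝ) + 1)) * ∑ v ∈ O.erase x, wcWt q SS F C v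
            ≤ 33/20 / (2 * ((q:ℝ) + 1)) * ((q : ℝ) * (M * (5/6:ℝ)^J)) :=
              mul_le_mul_of_nonneg_left hsum hc0
          _ ≤ M * (5/6:ℝ)^J := hcq
      have hMp : M * (5/6:ℝ)^J ≤ wcPhi q SS F C * (5/6:ℝ)^J :=
        mul_le_mul_of_nonneg_right hMphi (by positivity)
      calc wcPhi q SS (F \ O) (insert x C)
          ≤ wcPhi q SS F C - wcWt q SS F C x
              + 33/20 / (2 * ((q:ℝ) + 1)) * ∑ v ∈ O.erase x, wcWt q SS F C v := h1
        _ ≤ wcPhi q SS F C + M * (5/6:ℝ)^J := by linarith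
        _ ≤ wcPhi q SS F C * (1 + (5/6:ℝ)^J) := by nlinarith
    calc wcPhi q SS (F \ O) (insert x C)
        ≤ wcPhi q SS F C * (1 + (5/6:ℝ)^J) := h2
      _ ≤ wcBudget q F.card * (1 + (5/6:ℝ)^J) :=
          mul_le_mul_of_nonneg_right hphi (by positivity)
      _ ≤ wcBudget q (F.card - (q+1)) := wcBudget_step q hq hF
      _ = wcBudget q ((F \ O).card) := by rw [hcards O hOF hOcard]
  · -- flat case
    push_neg at hcase
    have hJ1 : 1 ≤ J := by
      by_contra hJ0
      have hJ0' : J = 0 := Nat.eq_zero_of_not_pos hJ0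
      have hLF : L = F := by
        rw [hL]
        apply Finset.filter_true_of_mem
        intro v hv
        rw [hJ0', pow_zero, mul_one]
        exact hmax v hv
      rw [hLF] at hcase
      omega
    set F' := F \ L with hF'
    have hLsub : L ⊆ F := Finset.filter_subset _ _
    have hF'card : F.card - q ≤ F'.card := by
      rw [hF', Finset.card_sdiff_of_subset hLsub]
      omega
    have hJq : J * q ≤ F.card - q - 1 := by
      rw [hJ]
      exact Nat.div_mul_le_self _ _
    have hpig : (Finset.range J).card * q < F'.card := by
      rw [Finset.card_range]
      omega
    have hmaps : ∀ v ∈ F', Nat.findGreatest (fun i => wcWt q SS F C v ≤ M * (5/6:ℝ)^i) J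
        ∈ Finset.range J := by
      intro v hv
      have hvF : v ∈ F := (Finset.sdiff_subset) hv
      have hP0 : wcWt q SS F C v ≤ M * (5/6:ℝ)^0 := by
        rw [pow_zero, mul_one]
        exact hmax v hvF
      have hspec := Nat.findGreatest_spec
        (P := fun i => wcWt q SS F C v ≤ M * (5/6:ℝ)^i) (Nat.zero_le J) hP0
      have hle := Nat.findGreatest_le (P := fun i => wcWt q SS F C v ≤ M * (5/6:ℝ)^i) J
      rw [Finset.mem_range]
      rcases Nat.lt_or_ge (Nat.findGreatest (fun i => wcWt q SS F C v ≤ M * (5/6:ℝ)^i) J) J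
        with h | h
      · exact h
      · exfalso
        have heq : Nat.findGreatest (fun i => wcWt q SS F C v ≤ M * (5/6:ℝ)^i) J = J := by omega
        rw [heq] at hspec
        have : v ∈ L := by
          rw [hL, Finset.mem_filter]
          exact ⟨hvF, hspec⟩
        rw [hF', Finset.mem_sdiff] at hv
        exact hv.2 this
    obtain ⟨i, hi, hfib⟩ := Finset.exists_lt_card_fiber_of_mul_lt_card_of_maps_to hmaps hpig
    rw [Finset.mem_range] at hi
    obtain ⟨O, hOfib, hOcard⟩ := Finset.exists_subset_card_eq hfib
    have hOF' : O ⊆ F' := hOfib.trans (Finset.filter_subset _ _)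
    have hOF : O ⊆ F := hOF'.trans Finset.sdiff_subset
    have hup : ∀ v ∈ O, wcWt q SS F C v ≤ M * (5/6:ℝ)^i := by
      intro v hv
      have h2 := hOfib hv
      rw [Finset.mem_filter] at h2
      have hvF : v ∈ F := (Finset.sdiff_subset) h2.1
      have hP0 : wcWt q SS F C v ≤ M * (5/6:ℝ)^0 := by
        rw [pow_zero, mul_one]
        exact hmax v hvF
      have hspec := Nat.findGreatest_spec
        (P := fun i => wcWt q SS F C v ≤ M * (5/6:ℝ)^i) (Nat.zero_le J) hP0
      rw [h2.2] at hspec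
      exact hspec
    have hdown : ∀ v ∈ O, M * (5/6:ℝ)^(i+1) < wcWt q SS F C v := by
      intro v hv
      have h2 := hOfib hv
      rw [Finset.mem_filter] at h2
      have h3 := Nat.findGreatest_is_greatest (k := i+1) (n := J)
        (P := fun j => wcWt q SS F C v ≤ M * (5/6:ℝ)^j) (by rw [h2.2]; omega) (by omega)
      exact lt_of_not_ge h3
    refine ⟨O, hOF, hOcard, ?_⟩
    intro x hx
    have h1 := phi_after q SS F C O hOF hOcard hx
    have herase : (O.erase x).card = q := by
      rw [Finset.card_erase_of_mem hx, hOcard]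
      omega
    have hsum : ∑ v ∈ O.erase x, wcWt q SS F C v ≤ (q : ℝ) * (M * (5/6:ℝ)^i) := by
      have h2 := Finset.sum_le_card_nsmul (O.erase x) (wcWt q SS F C) (M * (5/6:ℝ)^i) ?_
      · rw [herase] at h2
        simpa [nsmul_eq_mul] using h2
      · intro v hv
        exact hup v (Finset.mem_of_mem_erase hv)
    have hx1 : M * (5/6:ℝ)^i < 6/5 * wcWt q SS F C x := by
      have h2 := hdown x hx
      have : M * (5/6:ℝ)^i = 6/5 * (M * (5/6:ℝ)^(i+1)) := by ring
      rw [this]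
      linarith
    have hwx : 0 ≤ wcWt q SS F C x := wcWt_nonneg q SS F C x
    have hflat : wcPhi q SS (F \ O) (insert x C) ≤ wcPhi q SS F C := by
      have hkey : 33/20 / (2 * ((q:ℝ) + 1)) * ∑ v ∈ O.erase x, wcWt q SS F C v
          ≤ wcWt q SS F C x := by
        have h3 : 33/20 / (2 * ((q:ℝ) + 1)) * ∑ v ∈ O.erase x, wcWt q SS F C v
            ≤ 33/20 / (2 * ((q:ℝ) + 1)) * ((q : ℝ) * (6/5 * wcWt q SS F C x)) := by
          apply mul_le_mul_of_nonneg_left _ hc0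
          calc ∑ v ∈ O.erase x, wcWt q SS F C v ≤ (q : ℝ) * (M * (5/6:ℝ)^i) := hsum
            _ ≤ (q : ℝ) * (6/5 * wcWt q SS F C x) := by
                apply mul_le_mul_of_nonneg_left (le_of_lt hx1) (Nat.cast_nonneg q)
        have h4 : 33/20 / (2 * ((q:ℝ) + 1)) * ((q : ℝ) * (6/5 * wcWt q SS F C x))
            ≤ wcWt q SS F C x := by
          rw [div_mul_eq_mul_div, div_le_iff₀ hq1]
          have hqc := Nat.cast_nonneg (α := ℝ) q
          nlinarith
        linarith
      linarith
    calc wcPhi q SS (F \ O) (insert x C) ≤ wcPhi q SS F C := hflat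
      _ ≤ wcBudget q F.card := hphi
      _ ≤ wcBudget q ((F \ O).card) := by
          apply wcBudget_mono
          rw [hcards O hOF hOcard]
          omega

end Abstract


section Abstract2
variable {α : Type*} [DecidableEq α]

lemma wc_main (q : ℕ) (hq : 0 < q) (SS : Finset (Finset α)) :
    ∀ N F C, F.card = N → wcPhi q SS F C ≤ wcBudget q N →
      WaiterCanForce q (fun C => ∀ S ∈ SS, (S ∩ C).Nonempty) F C := by
  intro N
  induction N using Nat.strong_induction_on with
  | _ N IH =>
    intro F C hcard hphi
    rw [WaiterCanForce]
    split_ifs with hlt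
    · intro S hS
      by_contra hne
      rw [Finset.not_nonempty_iff_eq_empty] at hne
      have h1 : wcRho q ^ q ≤ wcPhi q SS F C := by
        have hmem : S ∈ SS.filter (fun S => S ∩ C = ∅) := Finset.mem_filter.mpr ⟨hS, hne⟩
        have h2 : wcRho q ^ q ≤ wcRho q ^ (S ∩ F).card := by
          apply pow_le_pow_of_le_one (le_of_lt (wcRho_pos q)) (wcRho_le_one q)
          calc (S ∩ F).card ≤ F.card := Finset.card_le_card Finset.inter_subset_right
            _ ≤ q := by omega
        calc wcRho q ^ q ≤ wcRho q ^ (S ∩ F).card := h2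
          _ ≤ wcPhi q SS F C := by
            rw [wcPhi]
            exact Finset.single_le_sum
              (fun T _ => pow_nonneg (le_of_lt (wcRho_pos q)) ((T ∩ F).card)) hmem
      have h3 := wcBudget_le q N
      have h5 : 0 < wcRho q ^ q := pow_pos (wcRho_pos q) q
      linarith
    · have hF : q + 1 ≤ F.card := by omega
      have hphi' : wcPhi q SS F C ≤ wcBudget q F.card := by rw [hcard]; exact hphi
      obtain ⟨O, hOF, hOcard, hstep⟩ := exists_good_offer q hq SS F C hF hphi'
      refine ⟨O, hOF, hOcard, ?_⟩
      intro x hx _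
      have hlt2 : (F \ O).card < N := by
        rw [Finset.card_sdiff_of_subset hOF, hOcard, hcard]
        omega
      exact IH _ hlt2 _ _ rfl (hstep x hx)

lemma waiterCanForce_mono (q : ℕ) {P Q : Finset α → Prop} (h : ∀ C, P C → Q C) :
    ∀ N F C, F.card = N → WaiterCanForce q P F C → WaiterCanForce q Q F C := by
  intro N
  induction N using Nat.strong_induction_on with
  | _ N IH =>
    intro F C hcard hP
    rw [WaiterCanForce] at hP ⊢
    split_ifs at hP ⊢ with hlt
    · exact h C hP
    · obtain ⟨O, hOF, hOcard, hrec⟩ := hP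
      refine ⟨O, hOF, hOcard, fun x hx hOF' => ?_⟩
      have hlt2 : (F \ O).card < N := by
        rw [Finset.card_sdiff_of_subset hOF, hOcard, hcard]
        have : q + 1 ≤ F.card := by omega
        omega
      exact IH _ hlt2 _ _ rfl (hrec x hx hOF')

end Abstract2




section Numeric

lemma choose_le_two_pow (n k : ℕ) : n.choose k ≤ 2 ^ n := by
  by_cases h : k ≤ n
  · calc n.choose k ≤ ∑ i ∈ Finset.range (n+1), n.choose i :=
        Finset.single_le_sum (fun i _ => Nat.zero_le _) (Finset.mem_range.mpr (by omega))
      _ = 2 ^ n := Nat.sum_range_choose n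
  · rw [Nat.choose_eq_zero_of_lt (by omega)]
    exact Nat.zero_le _

lemma two_le_exp : (2:ℝ) ≤ Real.exp (7/10) := by
  by_contra hcon
  push_neg at hcon
  have h0 : (0:ℝ) < Real.exp (7/10) := Real.exp_pos _
  have hpow : Real.exp (7/10) ^ (10:ℕ) = Real.exp 7 := by
    rw [← Real.exp_nat_mul]
    norm_num
  have h1 : Real.exp 7 ≤ 2 ^ (10:ℕ) := by
    rw [← hpow]
    exact pow_le_pow_left₀ (le_of_lt h0) (le_of_lt hcon) 10
  have he := Real.exp_one_gt_d9
  have he0 : (0:ℝ) < Real.exp 1 := Real.exp_pos 1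
  have h7 : Real.exp 7 = Real.exp 1 * Real.exp 1 * Real.exp 1 * Real.exp 1 * Real.exp 1
      * Real.exp 1 * Real.exp 1 := by
    rw [← Real.exp_add, ← Real.exp_add, ← Real.exp_add, ← Real.exp_add, ← Real.exp_add,
      ← Real.exp_add]
    norm_num
  have e2 : (7.38905:ℝ) < Real.exp 1 * Real.exp 1 := by nlinarith
  have e4 : (54.59:ℝ) < Real.exp 1 * Real.exp 1 * (Real.exp 1 * Real.exp 1) := by nlinarith
  have e3 : (20.08:ℝ) < Real.exp 1 * Real.exp 1 * Real.exp 1 := by nlinarith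
  have e7 : (1025:ℝ) < Real.exp 7 := by
    rw [h7]
    nlinarith
  norm_num at h1
  linarith

end Numeric


set_option maxHeartbeats 2000000 in
/-- Let `G` be the complete bipartite graph with parts `U` of size `n` and
`W` of size `⌊5n/6⌋`, and let `d, q` be positive integers with `q ≤ n / (150 d)`.  For all
sufficiently large `n`, in the `(q : 1)` Waiter-Client game on `E(G)` Waiter has a strategy
ensuring that at the end of the game, for every `A ⊆ U` of size `⌈n/(7d)⌉` and every
`B ⊆ W` of size `⌈n/7⌉`, Client has claimed an edge between `A` and `B`. -/
theorem statement15 (d : ℕ) (hd : 0 < d) :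
    ∃ N : ℕ, ∀ n : ℕ, N ≤ n → ∀ q : ℕ, 0 < q → (q : ℝ) ≤ (n : ℝ) / (150 * d) →
      WaiterCanForce q
        (fun C : Finset (Sym2 (Fin n ⊕ Fin (5 * n / 6))) =>
          ∀ A : Finset (Fin n), A.card = ⌈(n : ℝ) / (7 * d)⌉₊ →
            ∀ B : Finset (Fin (5 * n / 6)), B.card = ⌈(n : ℝ) / 7⌉₊ →
              ∃ a ∈ A, ∃ b ∈ B, s(Sum.inl a, Sum.inr b) ∈ C)
        (cbBoard n (5 * n / 6)) ∅ := by
  classical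
  refine ⟨3100 * d + 100, ?_⟩
  intro n hn q hq hqle
  set m := 5 * n / 6 with hm
  set a' := ⌈(n : ℝ) / (7 * d)⌉₊ with ha'
  set b' := ⌈(n : ℝ) / 7⌉₊ with hb'
  set SS : Finset (Finset (Sym2 (Fin n ⊕ Fin m))) :=
    ((Finset.univ.powersetCard a') ×ˢ (Finset.univ.powersetCard b')).image
      (fun p => (p.1 ×ˢ p.2).image (fun ab => s(Sum.inl ab.1, Sum.inr ab.2))) with hSS
  -- injectivity of the edge map
  have hinj : Function.Injective
      (fun ab : Fin n × Fin m => (s(Sum.inl ab.1, Sum.inr ab.2) : Sym2 (Fin n ⊕ Fin m))) := by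
    rintro ⟨a1, b1⟩ ⟨a2, b2⟩ hab
    simp only [Sym2.eq_iff] at hab
    rcases hab with ⟨h1, h2⟩ | ⟨h1, h2⟩
    · simp only [Sum.inl.injEq] at h1
      simp only [Sum.inr.injEq] at h2
      simp [h1, h2]
    · exact absurd h1 (by simp)
  -- membership in the board
  have hboard : ∀ (a : Fin n) (b : Fin m),
      (s(Sum.inl a, Sum.inr b) : Sym2 (Fin n ⊕ Fin m)) ∈ cbBoard n m := by
    intro a b
    rw [cbBoard, Set.Finite.mem_toFinset, SimpleGraph.mem_edgeSet]
    simp [completeBipartiteGraph]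
  have hsub : ∀ S ∈ SS, S ⊆ cbBoard n m := by
    intro S hS
    rw [hSS, Finset.mem_image] at hS
    obtain ⟨p, _, rfl⟩ := hS
    intro e he
    rw [Finset.mem_image] at he
    obtain ⟨ab, _, rfl⟩ := he
    exact hboard ab.1 ab.2
  have hcardS : ∀ S ∈ SS, S.card = a' * b' := by
    intro S hS
    rw [hSS, Finset.mem_image] at hS
    obtain ⟨p, hp, rfl⟩ := hS
    rw [Finset.mem_product] at hp
    rw [Finset.card_image_of_injective _ hinj, Finset.card_product,
      Finset.mem_powersetCard_univ.mp hp.1, Finset.mem_powersetCard_univ.mp hp.2]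
  -- value of the initial potential
  have hphi_eq : wcPhi q SS (cbBoard n m) ∅ = (SS.card : ℝ) * wcRho q ^ (a' * b') := by
    rw [wcPhi]
    rw [Finset.filter_true_of_mem (fun S _ => Finset.inter_empty S)]
    rw [Finset.sum_congr rfl (fun S hS => by
      rw [Finset.inter_eq_left.mpr (hsub S hS), hcardS S hS])]
    rw [Finset.sum_const, nsmul_eq_mul]
  -- counting
  have hSScard : (SS.card : ℝ) ≤ 2 ^ n * 2 ^ m := by
    have h1 : SS.card ≤ 2 ^ n * 2 ^ m := by
      calc SS.card ≤ ((Finset.univ.powersetCard a') ×ˢ (Finset.univ.powersetCard b')).card :=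
            Finset.card_image_le
        _ = n.choose a' * m.choose b' := by
            rw [Finset.card_product, Finset.card_powersetCard, Finset.card_powersetCard,
              Finset.card_univ, Finset.card_univ, Fintype.card_fin, Fintype.card_fin]
        _ ≤ 2 ^ n * 2 ^ m := Nat.mul_le_mul (choose_le_two_pow n a') (choose_le_two_pow m b')
    calc (SS.card : ℝ) ≤ ((2 ^ n * 2 ^ m : ℕ) : ℝ) := Nat.cast_le.mpr h1
      _ = 2 ^ n * 2 ^ m := by push_cast; ring
  -- numeric bounds
  have hd1 : (1:ℝ) ≤ (d:ℝ) := by exact_mod_cast hd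
  have hnR : (3100 * (d:ℝ) + 100) ≤ (n:ℝ) := by exact_mod_cast hn
  have hn0 : (0:ℝ) < (n:ℝ) := by linarith
  have hmle : ((m:ℝ)) ≤ 5 * (n:ℝ) / 6 := by
    rw [hm]
    calc ((5 * n / 6 : ℕ) : ℝ) ≤ ((5 * n : ℕ) : ℝ) / 6 := Nat.cast_div_le
      _ = 5 * (n:ℝ) / 6 := by push_cast; ring
  have han : (n:ℝ) / (7 * d) ≤ (a' : ℝ) := Nat.le_ceil _
  have hbn : (n:ℝ) / 7 ≤ (b' : ℝ) := Nat.le_ceil _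
  have hq1R : (0:ℝ) < 2 * ((q:ℝ) + 1) := by positivity
  have hX : (7/10:ℝ) * ((n:ℝ) + (m:ℝ) + 1) + 13/2 + 7/10
      ≤ ((a' * b' : ℕ) : ℝ) / (2 * ((q:ℝ) + 1)) := by
    have hab : (n:ℝ)^2 / (49 * d) ≤ ((a' * b' : ℕ) : ℝ) := by
      have h1 : (n:ℝ) / (7 * d) * ((n:ℝ) / 7) ≤ (a' : ℝ) * (b' : ℝ) := by
        apply mul_le_mul han hbn (by positivity) (by positivity)
      have h2 : (n:ℝ) / (7 * d) * ((n:ℝ) / 7) = (n:ℝ)^2 / (49 * d) := by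
        field_simp
        ring
      rw [← h2]
      calc (n:ℝ) / (7 * d) * ((n:ℝ) / 7) ≤ (a' : ℝ) * (b' : ℝ) := h1
        _ = ((a' * b' : ℕ) : ℝ) := by push_cast; ring
    have hden : 2 * ((q:ℝ) + 1) ≤ ((n:ℝ) + 150 * d) / (75 * d) := by
      have : (2:ℝ) * ((q:ℝ) + 1) ≤ 2 * ((n:ℝ) / (150 * d) + 1) := by linarith
      calc (2:ℝ) * ((q:ℝ) + 1) ≤ 2 * ((n:ℝ) / (150 * d) + 1) := this
        _ = ((n:ℝ) + 150 * d) / (75 * d) := by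
            field_simp
            ring
    have hdenpos : (0:ℝ) < ((n:ℝ) + 150 * d) / (75 * d) := by positivity
    have h3 : (n:ℝ)^2 / (49 * d) / (((n:ℝ) + 150 * d) / (75 * d))
        ≤ ((a' * b' : ℕ) : ℝ) / (2 * ((q:ℝ) + 1)) :=
      div_le_div₀ (Nat.cast_nonneg _) hab hq1R hden
    have h4 : (n:ℝ)^2 / (49 * d) / (((n:ℝ) + 150 * d) / (75 * d))
        = 75 * (n:ℝ)^2 / (49 * ((n:ℝ) + 150 * d)) := by
      field_simp
    rw [h4] at h3
    refine le_trans ?_ h3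
    -- (7/10)(n + m + 1) + 7.2 ≤ 75 n^2/(49(n+150d))
    have hstep : (7/10:ℝ) * ((n:ℝ) + (m:ℝ) + 1) + 13/2 + 7/10
        ≤ (77/60:ℝ) * (n:ℝ) + 8 := by
      linarith
    refine le_trans hstep ?_
    rw [le_div_iff₀ (by positivity)]
    nlinarith [mul_nonneg (sub_nonneg.mpr hnR) hn0.le,
      mul_nonneg (sub_nonneg.mpr hnR) (by linarith : (0:ℝ) ≤ (d:ℝ)),
      mul_nonneg (sub_nonneg.mpr hd1) hn0.le, sq_nonneg ((n:ℝ) - 100)]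
  -- exponential comparison
  have hrho_pow : wcRho q ^ (a' * b') = Real.exp (-(((a' * b' : ℕ) : ℝ) / (2 * ((q:ℝ) + 1)))) := by
    rw [wcRho, ← Real.exp_nat_mul]
    congr 1
    field_simp
  have hrho_q : Real.exp (-(1/2 : ℝ)) ≤ wcRho q ^ q := by
    rw [wcRho, ← Real.exp_nat_mul]
    apply Real.exp_le_exp.mpr
    have h1 : (q:ℝ) / (2 * ((q:ℝ) + 1)) ≤ 1/2 := by
      rw [div_le_div_iff₀ hq1R (by norm_num)]
      linarith [Nat.cast_nonneg (α := ℝ) q]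
    have h2 : (q:ℝ) * -(1 / (2 * ((q:ℝ) + 1))) = -((q:ℝ) / (2 * ((q:ℝ) + 1))) := by ring
    rw [h2]
    linarith
  have hexp_half : Real.exp (-(7/10 : ℝ)) ≤ 1/2 := by
    rw [Real.exp_neg]
    rw [inv_le_iff_one_le_mul₀ (Real.exp_pos _)]
    nlinarith [two_le_exp, Real.exp_pos (7/10 : ℝ)]
  -- the main potential bound
  have hphi_le : wcPhi q SS (cbBoard n m) ∅ ≤ wcBudget q ((cbBoard n m).card) := by
    rw [hphi_eq]
    set X := ((a' * b' : ℕ) : ℝ) / (2 * ((q:ℝ) + 1)) with hXdef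
    calc (SS.card : ℝ) * wcRho q ^ (a' * b')
        ≤ (2 ^ n * 2 ^ m) * Real.exp (-X) := by
          rw [hrho_pow]
          apply mul_le_mul_of_nonneg_right hSScard (le_of_lt (Real.exp_pos _))
      _ ≤ (Real.exp (7/10) ^ n * Real.exp (7/10) ^ m) * Real.exp (-X) := by
          apply mul_le_mul_of_nonneg_right _ (le_of_lt (Real.exp_pos _))
          apply mul_le_mul (pow_le_pow_left₀ (by norm_num) two_le_exp n)
            (pow_le_pow_left₀ (by norm_num) two_le_exp m) (by positivity) (by positivity)
      _ = Real.exp ((n:ℝ) * (7/10) + (m:ℝ) * (7/10) + -X) := by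
          rw [Real.exp_add, Real.exp_add, Real.exp_nat_mul, Real.exp_nat_mul]
      _ ≤ Real.exp (-(1/2) + -(7/10) + -6) := by
          apply Real.exp_le_exp.mpr
          rw [hXdef]
          linarith [hX]
      _ = Real.exp (-(1/2)) * Real.exp (-(7/10)) * Real.exp (-6) := by
          rw [← Real.exp_add, ← Real.exp_add]
      _ ≤ wcRho q ^ q * (1/2) * Real.exp (-6) := by
          apply mul_le_mul_of_nonneg_right _ (le_of_lt (Real.exp_pos _))
          apply mul_le_mul hrho_q hexp_half (le_of_lt (Real.exp_pos _))
            (pow_nonneg (le_of_lt (wcRho_pos q)) q)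
      _ = wcRho q ^ q / 2 * Real.exp (-6) := by ring
      _ ≤ wcBudget q ((cbBoard n m).card) := wcBudget_ge q _
  -- conclude
  have hforce := wc_main q hq SS ((cbBoard n m).card) (cbBoard n m) ∅ rfl hphi_le
  refine waiterCanForce_mono q ?_ ((cbBoard n m).card) (cbBoard n m) ∅ rfl hforce
  intro C hC A hA B hB
  have hmem : (A ×ˢ B).image (fun ab => (s(Sum.inl ab.1, Sum.inr ab.2) : Sym2 (Fin n ⊕ Fin m)))
      ∈ SS := by
    rw [hSS]
    have hmem' : ((A, B) : Finset (Fin n) × Finset (Fin m))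
        ∈ (Finset.univ.powersetCard a') ×ˢ (Finset.univ.powersetCard b') := by
      rw [Finset.mem_product]
      exact ⟨Finset.mem_powersetCard_univ.mpr hA, Finset.mem_powersetCard_univ.mpr hB⟩
    exact Finset.mem_image_of_mem
      (fun p => (p.1 ×ˢ p.2).image (fun ab => s(Sum.inl ab.1, Sum.inr ab.2))) hmem'
  obtain ⟨e, he⟩ := hC _ hmem
  rw [Finset.mem_inter] at he
  obtain ⟨ab, habmem, habeq⟩ := Finset.mem_image.mp he.1
  rw [Finset.mem_product] at habmem
  exact ⟨ab.1, habmem.1, ab.2, habmem.2, habeq ▸ he.2⟩
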